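/- Consider two balls thrown independently into urns 0, 1, 2 with p(1) = p(2) = ε and p(0) = 1 − 2ε, let X_i be the indicator that urn i is occupied, and impose the external field (ε, 1, 1) on the law μ of (X_0, X_1, X_2) (i.e., reweight μ(η) proportionally to ε^{η_0}). Then for ε sufficiently small, X_1 and X_2 are strictly positively correlated under the reweighted measure: the unnormalized weights satisfy w(X_1=1, X_2=1)·w(X_1=0, X_2=0) > w(X_1=1, X_2=0)·w(X_1=0, X_2=1), where w(X_1=1,X_2=1) ∝ 2ε², w(X_1=0,X_2=0) ∝ (1−2ε)²ε, and w(X_1=1,X_2=0) = w(X_1=0,X_2=1) ∝ ε² + 2ε²(1−2ε). -/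
import Mathlib

theorem stmt_15 :
    ∃ ε₀ : ℝ, 0 < ε₀ ∧ ∀ ε : ℝ, 0 < ε → ε < ε₀ →
      (ε ^ 2 + 2 * ε ^ 2 * (1 - 2 * ε)) * (ε ^ 2 + 2 * ε ^ 2 * (1 - 2 * ε))
        < (2 * ε ^ 2) * ((1 - 2 * ε) ^ 2 * ε) := by
  refine ⟨1/10, by norm_num, fun ε hε hε' => ?_⟩
  nlinarith [pow_pos hε 2, pow_pos hε 3, sq_nonneg ε, mul_pos hε hε, sq_nonneg (1-2*ε), mul_pos (mul_pos hε hε) hε]
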